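/- Let Z be an F-semimartingale with Z_0 = 0, let (T_t) be a finite F-time-change with lim_{t→∞} T_t = ∞, and let S be the first hitting time process of T. Suppose Z is in synchronization with T. Then the time-changed process Y := Z∘T (i.e., Y_t = Z_{T_t}) is in synchronization with S: almost surely, Y is constant on every interval [S_{t-}, S_t]. -/

import Mathlib

open MeasureTheory Filter Topology Set

namespace TimeChangePaper

variable {Ω : Type*} {m : MeasurableSpace Ω}

/-- A real-valued process has càdlàg paths: right-continuous with left limits. -/
def CadlagPaths (Z : ℝ → Ω → ℝ) : Prop :=
  ∀ ω : Ω, ∀ t : ℝ,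
    Tendsto (fun s => Z s ω) (nhdsWithin t (Set.Ioi t)) (nhds (Z t ω)) ∧
    ∃ l : ℝ, Tendsto (fun s => Z s ω) (nhdsWithin t (Set.Iio t)) (nhds l)

/-- A real-valued process has càglàd paths: left-continuous with right limits. -/
def CagladPaths (H : ℝ → Ω → ℝ) : Prop :=
  ∀ ω : Ω, ∀ t : ℝ,
    Tendsto (fun s => H s ω) (nhdsWithin t (Set.Iio t)) (nhds (H t ω)) ∧
    ∃ l : ℝ, Tendsto (fun s => H s ω) (nhdsWithin t (Set.Ioi t)) (nhds l)

/-- Left limit of the path of `Z` at time `t`. -/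
noncomputable def leftLimP (Z : ℝ → Ω → ℝ) (t : ℝ) (ω : Ω) : ℝ :=
  Function.leftLim (fun s => Z s ω) t

/-- Jump of the path of `Z` at time `t`. -/
noncomputable def jumpP (Z : ℝ → Ω → ℝ) (t : ℝ) (ω : Ω) : ℝ :=
  Z t ω - leftLimP Z t ω

/-- Sum of the values `g s ω` over the (at most countably many nonzero) times
`s ∈ (0, t]`; used for sums of jump contributions `Σ_{0 < s ≤ t} g s ω`. -/
noncomputable def jumpSum (g : ℝ → Ω → ℝ) (t : ℝ) (ω : Ω) : ℝ :=
  ∑' s : ℝ, Set.indicator (Set.Ioc (0:ℝ) t) (fun u => g u ω) s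

/-- An `(F_t)`-time-change: a càdlàg, nondecreasing, nonnegative family of
(ℝ-valued, hence automatically finite) stopping times. -/
structure IsTimeChange (F : Filtration ℝ m) (T : ℝ → Ω → ℝ) : Prop where
  mono : ∀ ω, Monotone fun t => T t ω
  nonneg : ∀ ω t, 0 ≤ T t ω
  cadlag : CadlagPaths T
  stopping : ∀ t : ℝ, IsStoppingTime F (fun ω => ((T t ω : ℝ) : WithTop ℝ))

/-- `Z` is in synchronization with the time-change `T`: almost surely, `Z` is
constant on every interval `[T_{t-}, T_t]`. -/
def Synchronized (P : Measure Ω) (Z T : ℝ → Ω → ℝ) : Prop :=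
  ∀ᵐ ω ∂P, ∀ t : ℝ, 0 ≤ t → ∀ u ∈ Set.Icc (leftLimP T t ω) (T t ω),
    ∀ v ∈ Set.Icc (leftLimP T t ω) (T t ω), Z u ω = Z v ω

/-- Local martingale: there is a localizing sequence of stopping times increasing
to infinity such that each stopped process is a martingale. -/
def IsLocalMartingale (F : Filtration ℝ m) (P : Measure Ω) (M : ℝ → Ω → ℝ) : Prop :=
  ∃ τ : ℕ → Ω → ℝ, (∀ n, IsStoppingTime F (fun ω => ((τ n ω : ℝ) : WithTop ℝ))) ∧
    (∀ᵐ ω ∂P, Tendsto (fun n => τ n ω) atTop atTop) ∧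
    ∀ n, Martingale (MeasureTheory.stoppedProcess M (fun ω => ((τ n ω : ℝ) : WithTop ℝ))) F P

/-- `Z` is an `F`-semimartingale: a càdlàg adapted process which is the sum of a
càdlàg local martingale and a càdlàg adapted process of finite variation on compacts. -/
def IsSemimartingale (F : Filtration ℝ m) (P : Measure Ω) (Z : ℝ → Ω → ℝ) : Prop :=
  CadlagPaths Z ∧ Adapted F Z ∧
  ∃ M A : ℝ → Ω → ℝ,
    IsLocalMartingale F P M ∧ CadlagPaths M ∧
    CadlagPaths A ∧ Adapted F A ∧
    (∀ ω, ∀ a b : ℝ, BoundedVariationOn (fun s => A s ω) (Set.Icc a b)) ∧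
    ∀ᵐ ω ∂P, ∀ t, Z t ω = M t ω + A t ω

/-- The predictable σ-algebra on `ℝ × Ω`, generated by the left-open stochastic
intervals `(s,t] × A` with `A ∈ F_s`, together with `{0} × A` with `A ∈ F_0`. -/
def predictableSigma (F : Filtration ℝ m) : MeasurableSpace (ℝ × Ω) :=
  MeasurableSpace.generateFrom
    ({C : Set (ℝ × Ω) | ∃ s t : ℝ, ∃ A : Set Ω,
        s ≤ t ∧ MeasurableSet[F s] A ∧ C = Set.Ioc s t ×ˢ A} ∪
     {C : Set (ℝ × Ω) | ∃ A : Set Ω, MeasurableSet[F 0] A ∧ C = ({0} : Set ℝ) ×ˢ A})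

/-- A process is `F`-predictable if it is measurable w.r.t. the predictable σ-algebra. -/
def Predictable (F : Filtration ℝ m) (H : ℝ → Ω → ℝ) : Prop :=
  @Measurable (ℝ × Ω) ℝ (predictableSigma F) _ fun p => H p.1 p.2

/-- Mesh of the partition `π` truncated to `[0, t]`. -/
noncomputable def mesh (π : ℕ → ℝ) (t : ℝ) : ℝ :=
  ⨆ k : ℕ, (min (π (k + 1)) t - min (π k) t)

/-- `I` is (a version of) the Itô-type stochastic integral `t ↦ ∫_0^t H_s dZ_s`:
for every `t ≥ 0` and every deterministic sequence of partitions of `[0, ∞)` whose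
mesh on `[0, t]` tends to `0`, the left-endpoint Riemann sums converge in
probability to `I_t`. -/
def IsStochIntegral (P : Measure Ω) (H Z I : ℝ → Ω → ℝ) : Prop :=
  ∀ t : ℝ, 0 ≤ t → ∀ π : ℕ → ℕ → ℝ,
    (∀ n, π n 0 = 0) → (∀ n, Monotone (π n)) →
    (∀ n, Tendsto (fun k => π n k) atTop atTop) →
    Tendsto (fun n => mesh (π n) t) atTop (nhds 0) →
    TendstoInMeasure P
      (fun n ω => ∑' k : ℕ, H (π n k) ω * (Z (min (π n (k + 1)) t) ω - Z (min (π n k) t) ω))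
      atTop (fun ω => I t ω)

/-- First hitting time process (generalized inverse) of the process `S`:
`T_t = inf {u > 0 : S_u > t}`. -/
noncomputable def hittingTimeOf (S : ℝ → Ω → ℝ) (t : ℝ) (ω : Ω) : ℝ :=
  sInf {u : ℝ | 0 < u ∧ t < S u ω}

/-- `D` and `E` are dual: either `E` is the first hitting time process of `D`, or
`D` is the first hitting time process of `E`. -/
def DualPair (D E : ℝ → Ω → ℝ) : Prop :=
  (∀ t : ℝ, 0 ≤ t → ∀ ω, E t ω = hittingTimeOf D t ω) ∨
  (∀ t : ℝ, 0 ≤ t → ∀ ω, D t ω = hittingTimeOf E t ω)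

/-- The pair of a strictly increasing semimartingale `D` (with `D_0 = 0`,
`lim D_t = ∞`) and a continuous time-change `E` (with `E_0 = 0`, `lim E_t = ∞`),
each inducing the other as its first hitting time process. -/
structure IsDualPair (F : Filtration ℝ m) (P : Measure Ω) (D E : ℝ → Ω → ℝ) : Prop where
  semimartD : IsSemimartingale F P D
  strictMonoD : ∀ ω, StrictMonoOn (fun t => D t ω) (Set.Ici (0:ℝ))
  zeroD : ∀ ω, ∀ t ≤ (0:ℝ), D t ω = 0
  infD : ∀ᵐ ω ∂P, Tendsto (fun t => D t ω) atTop atTop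
  timeChangeE : IsTimeChange F E
  contE : ∀ ω, Continuous fun t => E t ω
  zeroE : ∀ ω, ∀ t ≤ (0:ℝ), E t ω = 0
  infE : ∀ᵐ ω ∂P, Tendsto (fun t => E t ω) atTop atTop
  dual : DualPair D E

/-- Right-continuity of the filtration (part of the usual conditions). -/
def RightContinuousFiltration (F : Filtration ℝ m) : Prop :=
  ∀ t : ℝ, (F t : MeasurableSpace Ω) = ⨅ (s : ℝ) (_ : t < s), F s

/-- Completeness of the filtration w.r.t. `P` (part of the usual conditions). -/
def CompleteFiltration (F : Filtration ℝ m) (P : Measure Ω) : Prop :=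
  ∀ t : ℝ, ∀ N : Set Ω, P N = 0 → ∀ N' ⊆ N, MeasurableSet[F t] N'

/-- A standard `F`-Brownian motion: continuous adapted paths started at `0`, with
Gaussian increments `B_t - B_s ~ N(0, t-s)` independent of `F_s`. -/
def IsBrownianMotion (F : Filtration ℝ m) (P : Measure Ω) (B : ℝ → Ω → ℝ) : Prop :=
  (∀ ω, ∀ t ≤ (0:ℝ), B t ω = 0) ∧
  (∀ ω, Continuous fun t => B t ω) ∧
  Adapted F B ∧
  ∀ s t : ℝ, 0 ≤ s → s ≤ t →
    P.map (fun ω => B t ω - B s ω) = ProbabilityTheory.gaussianReal 0 (Real.toNNReal (t - s)) ∧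
    ProbabilityTheory.Indep
      (MeasurableSpace.comap (fun ω => B t ω - B s ω) inferInstance) (F s) P


/-- Let `Z` be an `F`-semimartingale with `Z_0 = 0`, `T` a finite
`F`-time-change with `T_0 = 0` and `lim_{t→∞} T_t = ∞` a.s., and `S` the first
hitting time process of `T`. If `Z` is in synchronization with `T`, then the
time-changed process `Y = Z ∘ T` is in synchronization with `S`. -/
theorem timeChanged_process_synchronized
    (F : Filtration ℝ m) (P : Measure Ω) [IsProbabilityMeasure P]
    (Z T S : ℝ → Ω → ℝ)
    (hZ : IsSemimartingale F P Z)
    (hZ0 : ∀ ω, ∀ t ≤ (0:ℝ), Z t ω = 0)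
    (hT : IsTimeChange F T)
    (hT0 : ∀ ω, ∀ t ≤ (0:ℝ), T t ω = 0)
    (hTinf : ∀ᵐ ω ∂P, Tendsto (fun t => T t ω) atTop atTop)
    (hS : ∀ t ω, S t ω = hittingTimeOf T t ω)
    (hsync : Synchronized P Z T) :
    Synchronized P (fun t ω => Z (T t ω) ω) S := by
  filter_upwards [hTinf, hsync] with ω hω hsyncω
  intro t ht u hu v hv
  have hmf : Monotone fun s => T s ω := hT.mono ω
  -- the hitting set
  have hAne : ∀ s : ℝ, {w : ℝ | 0 < w ∧ s < T w ω}.Nonempty := by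
    intro s
    obtain ⟨x, hx1, hx2⟩ := ((hω.eventually_gt_atTop s).and (eventually_gt_atTop (0:ℝ))).exists
    exact ⟨x, hx2, hx1⟩
  have hAbdd : ∀ s : ℝ, BddBelow {w : ℝ | 0 < w ∧ s < T w ω} :=
    fun s => ⟨0, fun x hx => hx.1.le⟩
  have hgA : ∀ s : ℝ, S s ω = sInf {w : ℝ | 0 < w ∧ s < T w ω} := by
    intro s; rw [hS]; rfl
  have hg_nonneg : ∀ s : ℝ, 0 ≤ S s ω := by
    intro s; rw [hgA s]; exact le_csInf (hAne s) fun x hx => hx.1.le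
  have hg_mono : Monotone fun s => S s ω := by
    intro a b hab
    simp only [hgA]
    exact csInf_le_csInf (hAbdd a) (hAne b) (fun x hx => ⟨hx.1, lt_of_le_of_lt hab hx.2⟩)
  have hc : ∀ s w : ℝ, 0 < w → w < S s ω → T w ω ≤ s := by
    intro s w hw0 hwg
    by_contra h
    push_neg at h
    have : S s ω ≤ w := by rw [hgA s]; exact csInf_le (hAbdd s) ⟨hw0, h⟩
    linarith
  have hd : ∀ s w : ℝ, S s ω < w → s < T w ω := by
    intro s w hgw
    rw [hgA s] at hgw
    obtain ⟨x, hx, hxw⟩ := exists_lt_of_csInf_lt (hAne s) hgw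
    exact hx.2.trans_le (hmf hxw.le)
  simp only [leftLimP] at hu hv
  set ℓ := Function.leftLim (fun s => S s ω) t with hℓdef
  show Z (T u ω) ω = Z (T v ω) ω
  rcases lt_or_ge ℓ (S t ω) with hlt | hge
  · have hℓ0 : 0 ≤ ℓ :=
      le_trans (hg_nonneg (t-1)) (hg_mono.le_leftLim (by linarith))
    have hflat : ∀ w ∈ Set.Ioo ℓ (S t ω), T w ω = t := by
      intro w hw
      have h1 : T w ω ≤ t := hc t w (lt_of_le_of_lt hℓ0 hw.1) hw.2
      have h2 : t ≤ T w ω := by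
        refine le_of_forall_lt fun s hs => ?_
        exact hd s w (lt_of_le_of_lt (hg_mono.le_leftLim hs) hw.1)
      linarith
    have hmemIoi : Set.Ioo ℓ (S t ω) ∈ 𝓝[>] ℓ := Ioo_mem_nhdsGT_of_mem ⟨le_rfl, hlt⟩
    have hmemIio : Set.Ioo ℓ (S t ω) ∈ 𝓝[<] (S t ω) := Ioo_mem_nhdsLT_of_mem ⟨hlt, le_rfl⟩
    have hfl : T ℓ ω = t := by
      have h1 : Tendsto (fun s => T s ω) (𝓝[>] ℓ) (𝓝 (T ℓ ω)) := (hT.cadlag ω ℓ).1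
      have h2 : Tendsto (fun s => T s ω) (𝓝[>] ℓ) (𝓝 t) :=
        Tendsto.congr' (eventuallyEq_of_mem hmemIoi fun w hw => (hflat w hw).symm)
          tendsto_const_nhds
      exact tendsto_nhds_unique h1 h2
    have hll : Function.leftLim (fun s => T s ω) (S t ω) = t := by
      have h1 : Tendsto (fun s => T s ω) (𝓝[<] (S t ω))
          (𝓝 (Function.leftLim (fun s => T s ω) (S t ω))) := hmf.tendsto_leftLim _
      have h2 : Tendsto (fun s => T s ω) (𝓝[<] (S t ω)) (𝓝 t) :=
        Tendsto.congr' (eventuallyEq_of_mem hmemIio fun w hw => (hflat w hw).symm)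
          tendsto_const_nhds
      exact tendsto_nhds_unique h1 h2
    obtain ⟨w₀, hw₀⟩ := exists_between hlt
    have hfg_ge : t ≤ T (S t ω) ω := by
      have h : T w₀ ω ≤ T (S t ω) ω := hmf hw₀.2.le
      rwa [hflat w₀ hw₀] at h
    have hsy := hsyncω (S t ω) (hg_nonneg t)
    simp only [leftLimP, hll] at hsy
    have key : ∀ w ∈ Set.Icc ℓ (S t ω), Z (T w ω) ω = Z t ω := by
      intro w hw
      rcases eq_or_lt_of_le hw.2 with heq | hlt2
      · rw [heq]
        exact hsy (T (S t ω) ω) ⟨hfg_ge, le_rfl⟩ t ⟨le_rfl, hfg_ge⟩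
      · rcases eq_or_lt_of_le hw.1 with heq | hlt1
        · rw [← heq, hfl]
        · rw [hflat w ⟨hlt1, hlt2⟩]
    calc Z (T u ω) ω = Z t ω := key u hu
      _ = Z (T v ω) ω := (key v hv).symm
  · have huv : u = v :=
      le_antisymm (hu.2.trans (hge.trans hv.1)) (hv.2.trans (hge.trans hu.1))
    rw [huv]

end TimeChangePaper
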